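/- There exist five points x, a, b, c, d of the Euclidean plane in general position (pairwise distinct, no three collinear) such that the six segments of the bouquet configuration consisting of the two triangle loops [x,a], [a,b], [b,x] and [x,c], [c,d], [d,x] have exactly 3 crossing pairs, i.e., exactly 3 unordered pairs of segments that share no endpoint and have nonempty intersection. -/

import Mathlib

/-- The closed segment spanned by a pair of points of the Euclidean plane. -/
def segOf (p : EuclideanSpace ℝ (Fin 2) × EuclideanSpace ℝ (Fin 2)) :
    Set (EuclideanSpace ℝ (Fin 2)) :=
  segment ℝ p.1 p.2

/-- Two segments (given by their endpoint pairs) share an endpoint. -/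
def SharesEndpoint (p q : EuclideanSpace ℝ (Fin 2) × EuclideanSpace ℝ (Fin 2)) : Prop :=
  p.1 = q.1 ∨ p.1 = q.2 ∨ p.2 = q.1 ∨ p.2 = q.2

private lemma pt_ne' (p q : EuclideanSpace ℝ (Fin 2)) (h : p 0 ≠ q 0 ∨ p 1 ≠ q 1) : p ≠ q := by
  intro h'; rcases h with h | h <;> exact h (by rw [h'])

private lemma not_collinear_cross' (p q r : EuclideanSpace ℝ (Fin 2))
    (h : (q 0 - p 0) * (r 1 - p 1) - (q 1 - p 1) * (r 0 - p 0) ≠ 0) :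
    ¬ Collinear ℝ ({p, q, r} : Set (EuclideanSpace ℝ (Fin 2))) := by
  intro hc
  obtain ⟨v, hv⟩ := (collinear_iff_of_mem (Set.mem_insert p _)).1 hc
  obtain ⟨s, hs⟩ := hv q (by simp)
  obtain ⟨t, ht⟩ := hv r (by simp)
  apply h
  have h1 : ∀ i, q i = s * v i + p i := fun i => by rw [hs]; rfl
  have h2 : ∀ i, r i = t * v i + p i := fun i => by rw [ht]; rfl
  rw [h1 0, h1 1, h2 0, h2 1]; ring

private lemma seg_sep' (α β c : ℝ) (p q r s : EuclideanSpace ℝ (Fin 2))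
    (h1 : α * p 0 + β * p 1 ≤ c) (h2 : α * q 0 + β * q 1 ≤ c)
    (h3 : c < α * r 0 + β * r 1) (h4 : c < α * s 0 + β * s 1) :
    ¬ (segment ℝ p q ∩ segment ℝ r s).Nonempty := by
  rintro ⟨z, ⟨u1, v1, hu1, hv1, huv1, hz1⟩, ⟨u2, v2, hu2, hv2, huv2, hz2⟩⟩
  have e1 : ∀ i, z i = u1 * p i + v1 * q i := fun i => by rw [← hz1]; rfl
  have e2 : ∀ i, z i = u2 * r i + v2 * s i := fun i => by rw [← hz2]; rfl
  have hc1 : u1 * c + v1 * c = c := by rw [← add_mul, huv1, one_mul]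
  have hc2 : u2 * c + v2 * c = c := by rw [← add_mul, huv2, one_mul]
  have A : α * z 0 + β * z 1 ≤ c := by
    rw [e1 0, e1 1]
    nlinarith [mul_le_mul_of_nonneg_left h1 hu1, mul_le_mul_of_nonneg_left h2 hv1]
  have B : c < α * z 0 + β * z 1 := by
    rw [e2 0, e2 1]
    rcases eq_or_lt_of_le hu2 with h | h
    · have hv : v2 = 1 := by linarith
      rw [← h, hv]; ring_nf; linarith
    · nlinarith [mul_le_mul_of_nonneg_left h4.le hv2, mul_lt_mul_of_pos_left h3 h]
  linarith

set_option maxHeartbeats 4000000 in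
/-- There exist five points `x, a, b, c, d` in general position in the plane such that the
six segments of the bouquet configuration (two triangle loops `[x,a], [a,b], [b,x]` and
`[x,c], [c,d], [d,x]`) have exactly 3 crossing pairs. -/
theorem exists_bouquet_six_sticks_three_crossings :
    ∃ x a b c d : EuclideanSpace ℝ (Fin 2),
      (∀ i j : Fin 5, i ≠ j → ![x, a, b, c, d] i ≠ ![x, a, b, c, d] j) ∧
      (∀ i j k : Fin 5, i ≠ j → j ≠ k → i ≠ k →
        ¬ Collinear ℝ ({![x, a, b, c, d] i, ![x, a, b, c, d] j,
          ![x, a, b, c, d] k} : Set (EuclideanSpace ℝ (Fin 2)))) ∧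
      ({p : Fin 6 × Fin 6 | p.1 < p.2 ∧
        ¬ SharesEndpoint (![(x, a), (a, b), (b, x), (x, c), (c, d), (d, x)] p.1)
          (![(x, a), (a, b), (b, x), (x, c), (c, d), (d, x)] p.2) ∧
        (segOf (![(x, a), (a, b), (b, x), (x, c), (c, d), (d, x)] p.1) ∩
          segOf (![(x, a), (a, b), (b, x), (x, c), (c, d), (d, x)] p.2)).Nonempty}).ncard
        = 3 := by
  refine ⟨!₂[0,0], !₂[0,1], !₂[2,1], !₂[1,0], !₂[1,2], ?_, ?_, ?_⟩
  · intro i j hij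
    fin_cases i <;> fin_cases j <;>
      first
      | exact absurd rfl hij
      | exact pt_ne' _ _ (by norm_num)
  · intro i j k hij hjk hik
    fin_cases i <;> fin_cases j <;> fin_cases k <;>
      first
      | exact absurd rfl hij
      | exact absurd rfl hjk
      | exact absurd rfl hik
      | exact not_collinear_cross' _ _ _ (by norm_num)
  · -- crossings
    have m14 : (segment ℝ (!₂[0,1] : EuclideanSpace ℝ (Fin 2)) !₂[2,1] ∩
        segment ℝ (!₂[1,0] : EuclideanSpace ℝ (Fin 2)) !₂[1,2]).Nonempty := by
      refine ⟨!₂[1,1], ⟨1/2, 1/2, by norm_num, by norm_num, by norm_num, ?_⟩,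
        ⟨1/2, 1/2, by norm_num, by norm_num, by norm_num, ?_⟩⟩ <;>
        · ext i; fin_cases i <;> norm_num [PiLp.add_apply, PiLp.smul_apply]
    have m15 : (segment ℝ (!₂[0,1] : EuclideanSpace ℝ (Fin 2)) !₂[2,1] ∩
        segment ℝ (!₂[1,2] : EuclideanSpace ℝ (Fin 2)) !₂[0,0]).Nonempty := by
      refine ⟨!₂[1/2,1], ⟨3/4, 1/4, by norm_num, by norm_num, by norm_num, ?_⟩,
        ⟨1/2, 1/2, by norm_num, by norm_num, by norm_num, ?_⟩⟩ <;>
        · ext i; fin_cases i <;> norm_num [PiLp.add_apply, PiLp.smul_apply]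
    have m24 : (segment ℝ (!₂[2,1] : EuclideanSpace ℝ (Fin 2)) !₂[0,0] ∩
        segment ℝ (!₂[1,0] : EuclideanSpace ℝ (Fin 2)) !₂[1,2]).Nonempty := by
      refine ⟨!₂[1,1/2], ⟨1/2, 1/2, by norm_num, by norm_num, by norm_num, ?_⟩,
        ⟨3/4, 1/4, by norm_num, by norm_num, by norm_num, ?_⟩⟩ <;>
        · ext i; fin_cases i <;> norm_num [PiLp.add_apply, PiLp.smul_apply]
    have n04 : ¬ (segment ℝ (!₂[0,0] : EuclideanSpace ℝ (Fin 2)) !₂[0,1] ∩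
        segment ℝ (!₂[1,0] : EuclideanSpace ℝ (Fin 2)) !₂[1,2]).Nonempty :=
      seg_sep' 1 0 (1/2) _ _ _ _ (by norm_num) (by norm_num) (by norm_num) (by norm_num)
    have n13 : ¬ (segment ℝ (!₂[0,1] : EuclideanSpace ℝ (Fin 2)) !₂[2,1] ∩
        segment ℝ (!₂[0,0] : EuclideanSpace ℝ (Fin 2)) !₂[1,0]).Nonempty :=
      seg_sep' 0 (-1) (-1/2) _ _ _ _ (by norm_num) (by norm_num) (by norm_num) (by norm_num)
    have hset : ({p : Fin 6 × Fin 6 | p.1 < p.2 ∧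
        ¬ SharesEndpoint
          (![((!₂[0,0] : EuclideanSpace ℝ (Fin 2)), (!₂[0,1] : EuclideanSpace ℝ (Fin 2))),
             (!₂[0,1], !₂[2,1]), (!₂[2,1], !₂[0,0]), (!₂[0,0], !₂[1,0]), (!₂[1,0], !₂[1,2]),
             (!₂[1,2], !₂[0,0])] p.1)
          (![((!₂[0,0] : EuclideanSpace ℝ (Fin 2)), (!₂[0,1] : EuclideanSpace ℝ (Fin 2))),
             (!₂[0,1], !₂[2,1]), (!₂[2,1], !₂[0,0]), (!₂[0,0], !₂[1,0]), (!₂[1,0], !₂[1,2]),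
             (!₂[1,2], !₂[0,0])] p.2) ∧
        (segOf (![((!₂[0,0] : EuclideanSpace ℝ (Fin 2)), (!₂[0,1] : EuclideanSpace ℝ (Fin 2))),
             (!₂[0,1], !₂[2,1]), (!₂[2,1], !₂[0,0]), (!₂[0,0], !₂[1,0]), (!₂[1,0], !₂[1,2]),
             (!₂[1,2], !₂[0,0])] p.1) ∩
          segOf (![((!₂[0,0] : EuclideanSpace ℝ (Fin 2)), (!₂[0,1] : EuclideanSpace ℝ (Fin 2))),
             (!₂[0,1], !₂[2,1]), (!₂[2,1], !₂[0,0]), (!₂[0,0], !₂[1,0]), (!₂[1,0], !₂[1,2]),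
             (!₂[1,2], !₂[0,0])] p.2)).Nonempty})
        = {((1 : Fin 6), (4 : Fin 6)), ((1 : Fin 6), (5 : Fin 6)), ((2 : Fin 6), (4 : Fin 6))} := by
      ext ⟨i, j⟩
      simp only [Set.mem_setOf_eq, Set.mem_insert_iff, Set.mem_singleton_iff, Prod.mk.injEq]
      constructor
      · rintro ⟨hlt, hne, hcr⟩
        fin_cases i <;> fin_cases j <;>
          first
          | exact absurd hlt (by decide)
          | exact absurd (Or.inl rfl) hne
          | exact absurd (Or.inr (Or.inl rfl)) hne
          | exact absurd (Or.inr (Or.inr (Or.inl rfl))) hne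
          | exact absurd (Or.inr (Or.inr (Or.inr rfl))) hne
          | exact absurd hcr n04
          | exact absurd hcr n13
          | exact Or.inl ⟨rfl, rfl⟩
          | exact Or.inr (Or.inl ⟨rfl, rfl⟩)
          | exact Or.inr (Or.inr ⟨rfl, rfl⟩)
      · have hne14 : ¬ SharesEndpoint ((!₂[0,1] : EuclideanSpace ℝ (Fin 2)), (!₂[2,1] : EuclideanSpace ℝ (Fin 2)))
            ((!₂[1,0] : EuclideanSpace ℝ (Fin 2)), (!₂[1,2] : EuclideanSpace ℝ (Fin 2))) := by
          rintro (h | h | h | h) <;> exact pt_ne' _ _ (by norm_num) h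
        have hne15 : ¬ SharesEndpoint ((!₂[0,1] : EuclideanSpace ℝ (Fin 2)), (!₂[2,1] : EuclideanSpace ℝ (Fin 2)))
            ((!₂[1,2] : EuclideanSpace ℝ (Fin 2)), (!₂[0,0] : EuclideanSpace ℝ (Fin 2))) := by
          rintro (h | h | h | h) <;> exact pt_ne' _ _ (by norm_num) h
        have hne24 : ¬ SharesEndpoint ((!₂[2,1] : EuclideanSpace ℝ (Fin 2)), (!₂[0,0] : EuclideanSpace ℝ (Fin 2)))
            ((!₂[1,0] : EuclideanSpace ℝ (Fin 2)), (!₂[1,2] : EuclideanSpace ℝ (Fin 2))) := by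
          rintro (h | h | h | h) <;> exact pt_ne' _ _ (by norm_num) h
        rintro (⟨rfl, rfl⟩ | ⟨rfl, rfl⟩ | ⟨rfl, rfl⟩)
        · exact ⟨by decide, hne14, m14⟩
        · exact ⟨by decide, hne15, m15⟩
        · exact ⟨by decide, hne24, m24⟩
    rw [hset,
      Set.ncard_insert_of_notMem
        (by simp only [Set.mem_insert_iff, Set.mem_singleton_iff]; decide),
      Set.ncard_insert_of_notMem (by simp only [Set.mem_singleton_iff]; decide),
      Set.ncard_singleton]
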